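/- Linear variance growth for a decorrelated decomposition: let α > 1, κ > 0, M > 0, and let (g_j)_{j≥0} be functions in L²(μ) with ∫ g_j dμ = 0, ‖g_j‖²_{L²(μ)} ≤ M·2^{−jα} for all j, and such that for each j, ∫ (g_j∘τ_s)(g_j∘τ_{s'}) dμ = 0 whenever |s−s'| ≥ κ + 2^{j+1}. Let F = ∑_{j≥0} g_j (the series converges in L²(μ)). Then there is a constant C depending only on α, κ, M such that for every t ∈ ℝ, ∫ |∫₀ᵗ F(τ_s ω) ds|² dμ(ω) ≤ C |t|. -/

import Mathlib

open MeasureTheory Filter Set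

set_option linter.unusedSectionVars false
set_option maxHeartbeats 1000000

namespace LVG

variable {X : Type*} [MeasurableSpace X] {ν : Measure X}

lemma cs_abs {f g : X → ℝ} (hf : MemLp f 2 ν) (hg : MemLp g 2 ν) :
    ∫ x, |f x * g x| ∂ν ≤
      Real.sqrt (∫ x, f x ^ 2 ∂ν) * Real.sqrt (∫ x, g x ^ 2 ∂ν) := by
  have h2 : (2:ℝ).HolderConjugate 2 := Real.HolderConjugate.two_two
  have hof : (ENNReal.ofReal (2:ℝ)) = 2 := by norm_num
  have := integral_mul_norm_le_Lp_mul_Lq (μ := ν) h2 (hof ▸ hf) (hof ▸ hg)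
  have e1 : ∀ u : X → ℝ, (∫ x, ‖u x‖ ^ (2:ℝ) ∂ν) ^ (1/(2:ℝ))
      = Real.sqrt (∫ x, u x ^ 2 ∂ν) := by
    intro u
    rw [Real.sqrt_eq_rpow]
    congr 1
    refine integral_congr_ae (Eventually.of_forall fun x => ?_)
    show ‖u x‖ ^ (2:ℝ) = u x ^ 2
    rw [show ((2:ℝ)) = ((2:ℕ):ℝ) by norm_num, Real.rpow_natCast]
    simp [sq_abs]
  calc ∫ x, |f x * g x| ∂ν = ∫ x, ‖f x‖ * ‖g x‖ ∂ν := by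
        simp [abs_mul]
    _ ≤ _ := this
    _ = _ := by rw [e1 f, e1 g]

lemma cs {f g : X → ℝ} (hf : MemLp f 2 ν) (hg : MemLp g 2 ν) :
    |∫ x, f x * g x ∂ν| ≤
      Real.sqrt (∫ x, f x ^ 2 ∂ν) * Real.sqrt (∫ x, g x ^ 2 ∂ν) := by
  calc |∫ x, f x * g x ∂ν| = ‖∫ x, f x * g x ∂ν‖ := (Real.norm_eq_abs _).symm
    _ ≤ ∫ x, ‖f x * g x‖ ∂ν := norm_integral_le_integral_norm _
    _ = ∫ x, |f x * g x| ∂ν := by simp [Real.norm_eq_abs, abs_mul]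
    _ ≤ _ := cs_abs hf hg

lemma integrable_mul2 {f g : X → ℝ} (hf : MemLp f 2 ν) (hg : MemLp g 2 ν) :
    Integrable (fun x => f x * g x) ν := by
  refine ((hf.integrable_sq.add hg.integrable_sq).const_mul (1/2)).mono'
    (hf.1.mul hg.1) (Eventually.of_forall fun x => ?_)
  rw [Real.norm_eq_abs, abs_mul]
  simp only [Pi.add_apply]
  nlinarith [sq_nonneg (|f x| - |g x|), sq_abs (f x), sq_abs (g x), abs_nonneg (f x),
    abs_nonneg (g x)]

lemma sqrt_pow' {x : ℝ} (hx : 0 ≤ x) (n : ℕ) :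
    Real.sqrt (x ^ n) = Real.sqrt x ^ n := by
  have h1 : (Real.sqrt x ^ n) ^ 2 = x ^ n := by
    rw [← pow_mul, mul_comm, pow_mul, Real.sq_sqrt hx]
  rw [← h1, Real.sqrt_sq (pow_nonneg (Real.sqrt_nonneg x) n)]

lemma sqrt_add_le' {x y : ℝ} (hx : 0 ≤ x) (hy : 0 ≤ y) :
    Real.sqrt (x + y) ≤ Real.sqrt x + Real.sqrt y := by
  have h := Real.sqrt_le_sqrt (show x + y ≤ (Real.sqrt x + Real.sqrt y) ^ 2 by
    nlinarith [Real.sq_sqrt hx, Real.sq_sqrt hy, Real.sqrt_nonneg x, Real.sqrt_nonneg y])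
  rwa [Real.sqrt_sq (by positivity)] at h

lemma mink {f g : X → ℝ} (hf : MemLp f 2 ν) (hg : MemLp g 2 ν) {A B : ℝ}
    (hA : 0 ≤ A) (hB : 0 ≤ B) (h1 : ∫ x, f x ^ 2 ∂ν ≤ A ^ 2)
    (h2 : ∫ x, g x ^ 2 ∂ν ≤ B ^ 2) :
    ∫ x, (f x + g x) ^ 2 ∂ν ≤ (A + B) ^ 2 := by
  have hfg := integrable_mul2 hf hg
  have hexp : ∫ x, (f x + g x) ^ 2 ∂ν
      = (∫ x, f x ^ 2 ∂ν + ∫ x, 2 * (f x * g x) ∂ν) + ∫ x, g x ^ 2 ∂ν := by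
    calc ∫ x, (f x + g x) ^ 2 ∂ν
        = ∫ x, ((f x ^ 2 + 2 * (f x * g x)) + g x ^ 2) ∂ν :=
          integral_congr_ae (Eventually.of_forall fun x => by ring)
      _ = ∫ x, (f x ^ 2 + 2 * (f x * g x)) ∂ν + ∫ x, g x ^ 2 ∂ν :=
          integral_add (hf.integrable_sq.add (hfg.const_mul 2)) hg.integrable_sq
      _ = _ := by rw [integral_add hf.integrable_sq (hfg.const_mul 2)]
  have hCS : ∫ x, f x * g x ∂ν ≤ A * B := by
    refine (le_abs_self _).trans ((cs hf hg).trans ?_)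
    have e1 : Real.sqrt (∫ x, f x ^ 2 ∂ν) ≤ A := by
      have := Real.sqrt_le_sqrt h1
      rwa [Real.sqrt_sq hA] at this
    have e2 : Real.sqrt (∫ x, g x ^ 2 ∂ν) ≤ B := by
      have := Real.sqrt_le_sqrt h2
      rwa [Real.sqrt_sq hB] at this
    exact mul_le_mul e1 e2 (Real.sqrt_nonneg _) hA
  have h2int : ∫ x, 2 * (f x * g x) ∂ν = 2 * ∫ x, f x * g x ∂ν := integral_const_mul 2 _
  nlinarith [h1, h2, hCS, hexp, h2int]

lemma sum_c_le {α κ M : ℝ} (hα : 1 < α) (hκ : 0 < κ) (hM : 0 < M) (N : ℕ) :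
    ∑ j ∈ Finset.range N,
        Real.sqrt (2 * (κ + 2 ^ (j + 1)) * (M * 2 ^ (-(j:ℝ) * α)))
      ≤ Real.sqrt (2 * M) * (Real.sqrt κ * (1 - Real.sqrt ((2:ℝ) ^ (-α)))⁻¹
        + Real.sqrt 2 * (1 - Real.sqrt ((2:ℝ) ^ ((1:ℝ) - α)))⁻¹) := by
  set r : ℝ := Real.sqrt ((2:ℝ) ^ (-α)) with hrdef
  set q : ℝ := Real.sqrt ((2:ℝ) ^ ((1:ℝ) - α)) with hqdef
  have hr0 : 0 ≤ r := Real.sqrt_nonneg _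
  have hq0 : 0 ≤ q := Real.sqrt_nonneg _
  have hr1 : r < 1 := by
    have := Real.sqrt_lt_sqrt (Real.rpow_nonneg (by norm_num : (0:ℝ) ≤ 2) (-α))
      (Real.rpow_lt_one_of_one_lt_of_neg one_lt_two (by linarith : -α < 0))
    rwa [Real.sqrt_one] at this
  have hq1 : q < 1 := by
    have := Real.sqrt_lt_sqrt (Real.rpow_nonneg (by norm_num : (0:ℝ) ≤ 2) ((1:ℝ) - α))
      (Real.rpow_lt_one_of_one_lt_of_neg one_lt_two (by linarith : (1:ℝ) - α < 0))
    rwa [Real.sqrt_one] at this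
  have hqr : Real.sqrt 2 * r = q := by
    rw [hrdef, hqdef, ← Real.sqrt_mul (by norm_num : (0:ℝ) ≤ 2)]
    congr 1
    rw [sub_eq_add_neg, Real.rpow_add two_pos, Real.rpow_one]
  set A : ℝ := Real.sqrt (2 * M) * Real.sqrt κ with hAdef
  set B : ℝ := Real.sqrt (2 * M) * Real.sqrt 2 with hBdef
  have hA0 : 0 ≤ A := by positivity
  have hB0 : 0 ≤ B := by positivity
  have hterm : ∀ j : ℕ,
      Real.sqrt (2 * (κ + 2 ^ (j + 1)) * (M * 2 ^ (-(j:ℝ) * α)))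
        ≤ A * r ^ j + B * q ^ j := by
    intro j
    have h2j : (0:ℝ) ≤ (2:ℝ) ^ (j + 1) := by positivity
    have hrp : (0:ℝ) ≤ (2:ℝ) ^ (-(j:ℝ) * α) := Real.rpow_nonneg (by norm_num) _
    have e0 : 2 * (κ + 2 ^ (j + 1)) * (M * 2 ^ (-(j:ℝ) * α))
        = (2 * M) * ((κ + 2 ^ (j + 1)) * 2 ^ (-(j:ℝ) * α)) := by ring
    have erpow : (2:ℝ) ^ (-(j:ℝ) * α) = ((2:ℝ) ^ (-α)) ^ j := by
      rw [show -(j:ℝ) * α = (-α) * (j:ℝ) by ring, Real.rpow_mul (by norm_num),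
        Real.rpow_natCast]
    have esq : Real.sqrt ((2:ℝ) ^ (-(j:ℝ) * α)) = r ^ j := by
      rw [erpow, sqrt_pow' (Real.rpow_nonneg (by norm_num) _)]
    have e1 : Real.sqrt (2 * (κ + 2 ^ (j + 1)) * (M * 2 ^ (-(j:ℝ) * α)))
        = Real.sqrt (2 * M) * (Real.sqrt (κ + 2 ^ (j + 1)) * r ^ j) := by
      rw [e0, Real.sqrt_mul (show (0:ℝ) ≤ 2 * M by positivity)
        ((κ + 2 ^ (j + 1)) * 2 ^ (-(j:ℝ) * α)),
        Real.sqrt_mul (show (0:ℝ) ≤ κ + 2 ^ (j + 1) by positivity) ((2:ℝ) ^ (-(j:ℝ) * α)), esq]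
    have e2 : Real.sqrt (κ + 2 ^ (j + 1)) ≤ Real.sqrt κ + Real.sqrt 2 * Real.sqrt 2 ^ j := by
      refine (sqrt_add_le' hκ.le h2j).trans ?_
      have : Real.sqrt ((2:ℝ) ^ (j + 1)) = Real.sqrt 2 * Real.sqrt 2 ^ j := by
        rw [pow_succ, mul_comm, Real.sqrt_mul (by norm_num : (0:ℝ) ≤ 2),
          sqrt_pow' (by norm_num : (0:ℝ) ≤ 2)]
      rw [this]
    calc Real.sqrt (2 * (κ + 2 ^ (j + 1)) * (M * 2 ^ (-(j:ℝ) * α)))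
        = Real.sqrt (2 * M) * (Real.sqrt (κ + 2 ^ (j + 1)) * r ^ j) := e1
      _ ≤ Real.sqrt (2 * M) * ((Real.sqrt κ + Real.sqrt 2 * Real.sqrt 2 ^ j) * r ^ j) := by
          have hrj : (0:ℝ) ≤ r ^ j := pow_nonneg hr0 j
          have := mul_le_mul_of_nonneg_right e2 hrj
          exact mul_le_mul_of_nonneg_left this (Real.sqrt_nonneg _)
      _ = A * r ^ j + B * (Real.sqrt 2 * r) ^ j := by
          rw [mul_pow]; ring
      _ = A * r ^ j + B * q ^ j := by rw [hqr]
  have hgeom : ∀ {x : ℝ}, 0 ≤ x → x < 1 →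
      ∑ j ∈ Finset.range N, x ^ j ≤ (1 - x)⁻¹ := by
    intro x hx0 hx1
    exact ((summable_geometric_of_lt_one hx0 hx1).sum_le_tsum _ (fun i _ => pow_nonneg hx0 i)
      ).trans_eq (tsum_geometric_of_lt_one hx0 hx1)
  calc ∑ j ∈ Finset.range N, Real.sqrt (2 * (κ + 2 ^ (j + 1)) * (M * 2 ^ (-(j:ℝ) * α)))
      ≤ ∑ j ∈ Finset.range N, (A * r ^ j + B * q ^ j) :=
        Finset.sum_le_sum fun j _ => hterm j
    _ = A * ∑ j ∈ Finset.range N, r ^ j + B * ∑ j ∈ Finset.range N, q ^ j := by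
        rw [Finset.sum_add_distrib, Finset.mul_sum, Finset.mul_sum]
    _ ≤ A * (1 - r)⁻¹ + B * (1 - q)⁻¹ :=
        add_le_add (mul_le_mul_of_nonneg_left (hgeom hr0 hr1) hA0)
          (mul_le_mul_of_nonneg_left (hgeom hq0 hq1) hB0)
    _ = _ := by rw [hAdef, hBdef]; ring

lemma sq_intervalIntegral (f : ℝ → ℝ) (t : ℝ) :
    (∫ s in (0:ℝ)..t, f s) ^ 2 = (∫ s in Set.Ioc (min 0 t) (max 0 t), f s) ^ 2 := by
  rcases le_or_gt 0 t with h | h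
  · rw [intervalIntegral.intervalIntegral_eq_integral_uIoc, if_pos h, uIoc_of_le h,
      min_eq_left h, max_eq_right h, smul_eq_mul, one_mul]
  · rw [intervalIntegral.intervalIntegral_eq_integral_uIoc, if_neg (not_le.mpr h),
      uIoc_of_ge h.le, min_eq_right h.le, max_eq_left h.le, smul_eq_mul, neg_one_mul, neg_sq]

variable {Ω : Type} [MeasurableSpace Ω] {μ : Measure Ω} [IsProbabilityMeasure μ]
  {τ : ℝ → Ω → Ω}

lemma integral_comp_mp {f : Ω → Ω} (hf : MeasurePreserving f μ μ) {u : Ω → ℝ}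
    (hu : AEStronglyMeasurable u μ) : ∫ ω, u (f ω) ∂μ = ∫ ω, u ω ∂μ := by
  conv_rhs => rw [← hf.map_eq]
  rw [integral_map hf.measurable.aemeasurable (by rwa [hf.map_eq])]

lemma prodInt (hτ : ∀ s, MeasurePreserving (τ s) μ μ)
    (hτm : Measurable fun p : ℝ × Ω => τ p.1 p.2)
    {h : Ω → ℝ} (hm : Measurable h) (hi : Integrable h μ)
    (ν : Measure ℝ) [IsFiniteMeasure ν] :
    Integrable (fun p : ℝ × Ω => h (τ p.1 p.2)) (ν.prod μ) := by
  have hmeas : Measurable fun p : ℝ × Ω => h (τ p.1 p.2) := hm.comp hτm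
  rw [integrable_prod_iff hmeas.aestronglyMeasurable]
  refine ⟨Eventually.of_forall fun s => ?_, ?_⟩
  · exact ((hτ s).integrable_comp hi.aestronglyMeasurable).mpr hi
  · have he : (fun s : ℝ => ∫ ω, ‖h (τ s ω)‖ ∂μ) = fun _ => ∫ ω, ‖h ω‖ ∂μ :=
      funext fun s => integral_comp_mp (hτ s) hi.norm.aestronglyMeasurable
    rw [he]; exact integrable_const _

lemma memc (hτ : ∀ s, MeasurePreserving (τ s) μ μ) {h : Ω → ℝ} (h2 : MemLp h 2 μ) (s : ℝ) :
    MemLp (fun ω => h (τ s ω)) 2 μ :=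
  h2.comp_measurePreserving (hτ s)

lemma int_sq_comp (hτ : ∀ s, MeasurePreserving (τ s) μ μ) {h : Ω → ℝ}
    (h2 : MemLp h 2 μ) (s : ℝ) :
    ∫ ω, (h (τ s ω)) ^ 2 ∂μ = ∫ ω, h ω ^ 2 ∂μ :=
  integral_comp_mp (hτ s) (u := fun ω => h ω ^ 2) h2.integrable_sq.aestronglyMeasurable

lemma finiteIoc (a b : ℝ) : IsFiniteMeasure (volume.restrict (Set.Ioc a b)) :=
  ⟨by rw [Measure.restrict_apply_univ]; simp [Real.volume_Ioc]⟩

lemma cov_bound (hτ : ∀ s, MeasurePreserving (τ s) μ μ)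
    (hτm : Measurable fun p : ℝ × Ω => τ p.1 p.2)
    (a b : ℝ) (hab : a ≤ b) {h : Ω → ℝ} (hm : Measurable h)
    (h2 : MemLp h 2 μ) {L B : ℝ} (hL : 0 ≤ L) (hB : ∫ ω, h ω ^ 2 ∂μ ≤ B)
    (hdec : ∀ s s' : ℝ, L ≤ |s - s'| → ∫ ω, h (τ s ω) * h (τ s' ω) ∂μ = 0) :
    ∫ ω, (∫ s in Set.Ioc a b, h (τ s ω)) ^ 2 ∂μ ≤ 2 * L * B * (b - a) := by
  set ν : Measure ℝ := volume.restrict (Set.Ioc a b) with hν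
  haveI : IsFiniteMeasure ν := finiteIoc a b
  have hIsq : 0 ≤ ∫ ω, h ω ^ 2 ∂μ := integral_nonneg fun _ => sq_nonneg _
  have hBnn : 0 ≤ B := hIsq.trans hB
  set Y : (ℝ × ℝ) × Ω → ℝ := fun q => h (τ q.1.1 q.2) * h (τ q.1.2 q.2) with hY
  have hYm : Measurable Y :=
    ((hm.comp (hτm.comp ((measurable_fst.comp measurable_fst).prodMk measurable_snd))).mul
      (hm.comp (hτm.comp ((measurable_snd.comp measurable_fst).prodMk measurable_snd))))
  have hIB : ∀ z : ℝ × ℝ, ∫ ω, |h (τ z.1 ω) * h (τ z.2 ω)| ∂μ ≤ B := by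
    intro z
    have hcs := cs_abs (memc hτ h2 z.1) (memc hτ h2 z.2)
    rw [int_sq_comp hτ h2, int_sq_comp hτ h2, Real.mul_self_sqrt hIsq] at hcs
    exact hcs.trans hB
  have hYint : Integrable Y ((ν.prod ν).prod μ) := by
    rw [integrable_prod_iff hYm.aestronglyMeasurable]
    refine ⟨Eventually.of_forall fun z => integrable_mul2 (memc hτ h2 z.1) (memc hτ h2 z.2), ?_⟩
    have hmeasInt : AEStronglyMeasurable (fun z : ℝ × ℝ => ∫ ω, ‖Y (z, ω)‖ ∂μ) (ν.prod ν) :=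
      (hYm.norm.stronglyMeasurable.integral_prod_right').aestronglyMeasurable
    refine (integrable_const B).mono' hmeasInt (Eventually.of_forall fun z => ?_)
    rw [Real.norm_eq_abs, abs_of_nonneg (integral_nonneg fun ω => norm_nonneg _)]
    calc ∫ ω, ‖Y (z, ω)‖ ∂μ = ∫ ω, |h (τ z.1 ω) * h (τ z.2 ω)| ∂μ := by
          simp [hY, Real.norm_eq_abs, abs_mul]
      _ ≤ B := hIB z
  have hsq : ∀ ω, (∫ s, h (τ s ω) ∂ν) ^ 2 = ∫ z, Y (z, ω) ∂(ν.prod ν) := by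
    intro ω
    rw [sq, ← integral_prod_mul (μ := ν) (ν := ν)
      (f := fun s => h (τ s ω)) (g := fun s => h (τ s ω))]
  have hswap : ∫ ω, ∫ z, Y (z, ω) ∂(ν.prod ν) ∂μ = ∫ z, ∫ ω, Y (z, ω) ∂μ ∂(ν.prod ν) := by
    exact (integral_integral_swap (μ := ν.prod ν) (ν := μ) (f := fun z ω => Y (z, ω))
      (by exact hYint)).symm
  set ρ : ℝ × ℝ → ℝ := fun z => ∫ ω, Y (z, ω) ∂μ with hρ
  have hρm : StronglyMeasurable ρ := hYm.stronglyMeasurable.integral_prod_right'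
  have hρ_bound : ∀ z, |ρ z| ≤ B := by
    intro z
    calc |ρ z| ≤ ∫ ω, |h (τ z.1 ω) * h (τ z.2 ω)| ∂μ := by
          rw [hρ]
          exact (Real.norm_eq_abs _ ▸ norm_integral_le_integral_norm _).trans
            (le_of_eq (by simp [hY, Real.norm_eq_abs, abs_mul]))
      _ ≤ B := hIB z
  have hρint : Integrable ρ (ν.prod ν) :=
    (integrable_const B).mono' hρm.aestronglyMeasurable
      (Eventually.of_forall fun z => by rw [Real.norm_eq_abs]; exact hρ_bound z)
  set D : Set (ℝ × ℝ) := {z | |z.1 - z.2| < L} with hD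
  have hDm : MeasurableSet D :=
    measurableSet_lt ((measurable_fst.sub measurable_snd).abs) measurable_const
  have hρD : ∀ z, |ρ z| ≤ D.indicator (fun _ => B) z := by
    intro z
    by_cases hz : z ∈ D
    · rw [indicator_of_mem hz]; exact hρ_bound z
    · rw [indicator_of_notMem hz]
      have hz' : L ≤ |z.1 - z.2| := not_lt.mp hz
      have : ρ z = 0 := hdec z.1 z.2 hz'
      simp [this]
  have hmeasD : ((ν.prod ν) D).toReal ≤ 2 * L * (b - a) := by
    have hle : (ν.prod ν) D ≤ ENNReal.ofReal (2 * L) * ENNReal.ofReal (b - a) := by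
      rw [Measure.prod_apply hDm]
      have hslice : ∀ s : ℝ, ν (Prod.mk s ⁻¹' D) ≤ ENNReal.ofReal (2 * L) := by
        intro s
        have hsub : Prod.mk s ⁻¹' D ⊆ Set.Ioo (s - L) (s + L) := by
          intro x hx
          simp only [hD, Set.mem_preimage, Set.mem_setOf_eq] at hx
          rw [abs_sub_lt_iff] at hx
          exact ⟨by linarith [hx.1, hx.2], by linarith [hx.1, hx.2]⟩
        calc ν (Prod.mk s ⁻¹' D) ≤ ν (Set.Ioo (s - L) (s + L)) := measure_mono hsub
          _ ≤ volume (Set.Ioo (s - L) (s + L)) := Measure.restrict_apply_le _ _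
          _ = ENNReal.ofReal (2 * L) := by rw [Real.volume_Ioo]; congr 1; ring
      calc ∫⁻ s, ν (Prod.mk s ⁻¹' D) ∂ν ≤ ∫⁻ _, ENNReal.ofReal (2 * L) ∂ν :=
            lintegral_mono hslice
        _ = ENNReal.ofReal (2 * L) * ν Set.univ := by rw [lintegral_const]
        _ = ENNReal.ofReal (2 * L) * ENNReal.ofReal (b - a) := by
            rw [hν, Measure.restrict_apply_univ, Real.volume_Ioc]
    have := ENNReal.toReal_mono (by finiteness) hle
    rwa [ENNReal.toReal_mul, ENNReal.toReal_ofReal (by positivity),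
      ENNReal.toReal_ofReal (by linarith)] at this
  calc ∫ ω, (∫ s, h (τ s ω) ∂ν) ^ 2 ∂μ
      = ∫ ω, ∫ z, Y (z, ω) ∂(ν.prod ν) ∂μ :=
        integral_congr_ae (Eventually.of_forall hsq)
    _ = ∫ z, ρ z ∂(ν.prod ν) := hswap
    _ ≤ ∫ z, D.indicator (fun _ => B) z ∂(ν.prod ν) := by
        refine integral_mono hρint ((integrable_const B).indicator hDm) fun z => ?_
        exact (le_abs_self _).trans (hρD z)
    _ = ((ν.prod ν) D).toReal • B := integral_indicator_const _ hDm
    _ ≤ 2 * L * B * (b - a) := by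
        rw [smul_eq_mul]
        nlinarith [ENNReal.toReal_nonneg (a := (ν.prod ν) D), hmeasD]

lemma crude (hτ : ∀ s, MeasurePreserving (τ s) μ μ)
    (hτm : Measurable fun p : ℝ × Ω => τ p.1 p.2)
    (a b : ℝ) (hab : a ≤ b) {h : Ω → ℝ} (hm : Measurable h) (h2 : MemLp h 2 μ) :
    MemLp (fun ω => ∫ s in Set.Ioc a b, h (τ s ω)) 2 μ ∧
    ∫ ω, (∫ s in Set.Ioc a b, h (τ s ω)) ^ 2 ∂μ ≤ (b - a) ^ 2 * ∫ ω, h ω ^ 2 ∂μ := by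
  set ν : Measure ℝ := volume.restrict (Set.Ioc a b) with hν
  haveI : IsFiniteMeasure ν := finiteIoc a b
  have hm2 : Measurable fun ω => h ω ^ 2 := hm.pow_const 2
  have hsqint : Integrable (fun ω => h ω ^ 2) μ := h2.integrable_sq
  have hint1 : Integrable h μ := h2.integrable one_le_two
  have W : Integrable (fun p : ℝ × Ω => h (τ p.1 p.2) ^ 2) (ν.prod μ) :=
    prodInt hτ hτm hm2 hsqint ν
  have W1 : Integrable (fun p : ℝ × Ω => h (τ p.1 p.2)) (ν.prod μ) :=
    prodInt hτ hτm hm hint1 ν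
  have ae1 : ∀ᵐ ω ∂μ, Integrable (fun s => h (τ s ω)) ν := W1.swap.prod_right_ae
  have ae2 : ∀ᵐ ω ∂μ, Integrable (fun s => h (τ s ω) ^ 2) ν := W.swap.prod_right_ae
  have hVint : Integrable (fun ω => ∫ s, h (τ s ω) ^ 2 ∂ν) μ := W.swap.integral_prod_left
  have hba : (0:ℝ) ≤ b - a := by linarith
  have hVval : ∫ ω, (∫ s, h (τ s ω) ^ 2 ∂ν) ∂μ = (b - a) * ∫ ω, h ω ^ 2 ∂μ := by
    rw [integral_integral_swap (μ := μ) (ν := ν) (f := fun ω s => h (τ s ω) ^ 2)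
      (by exact W.swap)]
    rw [integral_congr_ae (Eventually.of_forall fun s => int_sq_comp hτ h2 s)]
    rw [integral_const, measureReal_def, hν, Measure.restrict_apply_univ, Real.volume_Ioc,
      ENNReal.toReal_ofReal hba, smul_eq_mul]
  have hone : MemLp (fun _ : ℝ => (1:ℝ)) 2 ν := memLp_const 1
  have h1' : ∫ _ : ℝ, (1:ℝ) ∂ν = b - a := by
    rw [integral_const, measureReal_def, hν, Measure.restrict_apply_univ, Real.volume_Ioc,
      ENNReal.toReal_ofReal hba, smul_eq_mul, mul_one]
  have hptCS : ∀ᵐ ω ∂μ, (∫ s, h (τ s ω) ∂ν) ^ 2 ≤ (b - a) * ∫ s, h (τ s ω) ^ 2 ∂ν := by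
    filter_upwards [ae1, ae2] with ω H1 H2
    have hmeas : Measurable fun s => h (τ s ω) :=
      hm.comp (hτm.comp (measurable_id.prodMk measurable_const))
    have hmem : MemLp (fun s => h (τ s ω)) 2 ν :=
      (memLp_two_iff_integrable_sq hmeas.aestronglyMeasurable).mpr H2
    have hcs := cs hmem hone
    simp only [mul_one, one_pow] at hcs
    rw [h1'] at hcs
    have hnn : 0 ≤ ∫ s, h (τ s ω) ^ 2 ∂ν := integral_nonneg fun _ => sq_nonneg _
    calc (∫ s, h (τ s ω) ∂ν) ^ 2 = |∫ s, h (τ s ω) ∂ν| ^ 2 := (sq_abs _).symm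
      _ ≤ (Real.sqrt (∫ s, h (τ s ω) ^ 2 ∂ν) * Real.sqrt (b - a)) ^ 2 :=
          pow_le_pow_left₀ (abs_nonneg _) hcs 2
      _ = (b - a) * ∫ s, h (τ s ω) ^ 2 ∂ν := by
          rw [mul_pow, Real.sq_sqrt hnn, Real.sq_sqrt hba]; ring
  have hSm : AEStronglyMeasurable (fun ω => ∫ s, h (τ s ω) ∂ν) μ := by
    have : StronglyMeasurable fun p : Ω × ℝ => h (τ p.2 p.1) :=
      (hm.comp (hτm.comp (measurable_snd.prodMk measurable_fst))).stronglyMeasurable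
    exact this.integral_prod_right'.aestronglyMeasurable
  have hSsqm : AEStronglyMeasurable (fun ω => (∫ s, h (τ s ω) ∂ν) ^ 2) μ :=
    (hSm.mul hSm).congr (Eventually.of_forall fun ω => (pow_two _).symm)
  have hSsq_int : Integrable (fun ω => (∫ s, h (τ s ω) ∂ν) ^ 2) μ := by
    refine (hVint.const_mul (b - a)).mono' hSsqm ?_
    filter_upwards [hptCS] with ω hω
    rw [Real.norm_eq_abs, abs_of_nonneg (sq_nonneg _)]
    exact hω
  refine ⟨(memLp_two_iff_integrable_sq hSm).mpr hSsq_int, ?_⟩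
  calc ∫ ω, (∫ s, h (τ s ω) ∂ν) ^ 2 ∂μ
      ≤ ∫ ω, (b - a) * (∫ s, h (τ s ω) ^ 2 ∂ν) ∂μ :=
        integral_mono_ae hSsq_int (hVint.const_mul _) hptCS
    _ = (b - a) ^ 2 * ∫ ω, h ω ^ 2 ∂μ := by
        rw [integral_const_mul, hVval]; ring

lemma S_add (hτ : ∀ s, MeasurePreserving (τ s) μ μ)
    (hτm : Measurable fun p : ℝ × Ω => τ p.1 p.2) (a b : ℝ)
    {h₁ h₂ : Ω → ℝ} (m1 : Measurable h₁) (m2 : Measurable h₂)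
    (i1 : Integrable h₁ μ) (i2 : Integrable h₂ μ) :
    ∀ᵐ ω ∂μ, ∫ s in Set.Ioc a b, (h₁ (τ s ω) + h₂ (τ s ω)) =
      (∫ s in Set.Ioc a b, h₁ (τ s ω)) + ∫ s in Set.Ioc a b, h₂ (τ s ω) := by
  haveI : IsFiniteMeasure (volume.restrict (Set.Ioc a b)) := finiteIoc a b
  filter_upwards [(prodInt hτ hτm m1 i1 (volume.restrict (Set.Ioc a b))).swap.prod_right_ae,
    (prodInt hτ hτm m2 i2 (volume.restrict (Set.Ioc a b))).swap.prod_right_ae] with ω H1 H2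
  exact integral_add H1 H2

lemma ae_comp_eq (hτ : ∀ s, MeasurePreserving (τ s) μ μ)
    (hτm : Measurable fun p : ℝ × Ω => τ p.1 p.2)
    {u u' : Ω → ℝ} (hae : u =ᵐ[μ] u') (ν : Measure ℝ) [SFinite ν] :
    ∀ᵐ ω ∂μ, (fun s => u (τ s ω)) =ᵐ[ν] fun s => u' (τ s ω) := by
  obtain ⟨N, hNsub, hNm, hN0⟩ := exists_measurable_superset_of_null (ae_iff.mp hae)
  have hmap : Measurable fun p : Ω × ℝ => τ p.2 p.1 :=
    hτm.comp (measurable_snd.prodMk measurable_fst)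
  have hAm : MeasurableSet {p : Ω × ℝ | τ p.2 p.1 ∈ N} := hmap hNm
  have hA : (μ.prod ν) {p : Ω × ℝ | τ p.2 p.1 ∈ N} = 0 := by
    rw [Measure.prod_apply_symm hAm]
    have hz : ∀ s : ℝ, μ ((fun ω => (ω, s)) ⁻¹' {p : Ω × ℝ | τ p.2 p.1 ∈ N}) = 0 := by
      intro s
      have he : ((fun ω : Ω => (ω, s)) ⁻¹' {p : Ω × ℝ | τ p.2 p.1 ∈ N}) = τ s ⁻¹' N := rfl
      rw [he, (hτ s).measure_preimage hNm.nullMeasurableSet]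
      exact hN0
    exact (lintegral_congr fun y => hz y).trans lintegral_zero
  have hprod : ∀ᵐ p ∂(μ.prod ν), τ p.2 p.1 ∉ N := by
    rw [ae_iff]
    simpa [not_not] using hA
  filter_upwards [Measure.ae_ae_of_ae_prod hprod] with ω hω
  filter_upwards [hω] with s hs
  by_contra hne
  exact hs (hNsub hne)

end LVG

open LVG in
/-- Linear variance growth for a decorrelated decomposition: if `F = ∑ⱼ gⱼ` in `L²(μ)`
where the `gⱼ` are centered, `‖gⱼ‖²_{L²} ≤ M 2^{-jα}`, and `gⱼ` decorrelates at range
`κ + 2^{j+1}`, then `∫ |∫₀ᵗ F∘τ_s ds|² dμ ≤ C|t|` with `C` depending only on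
`α`, `κ`, `M`. -/
theorem linear_variance_growth_decorrelated_decomposition
    (α κ M : ℝ) (hα : 1 < α) (hκ : 0 < κ) (hM : 0 < M) :
    ∃ C : ℝ, 0 < C ∧
      ∀ (Ω : Type) (_ : MeasurableSpace Ω) (μ : Measure Ω), IsProbabilityMeasure μ →
        ∀ (τ : ℝ → Ω → Ω), (∀ s : ℝ, MeasurePreserving (τ s) μ μ) →
          Measurable (fun p : ℝ × Ω => τ p.1 p.2) →
        ∀ g : ℕ → Ω → ℝ, (∀ j, MemLp (g j) 2 μ) →
          (∀ j, ∫ ω, g j ω ∂μ = 0) →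
          (∀ j, ∫ ω, (g j ω) ^ 2 ∂μ ≤ M * 2 ^ (-(j : ℝ) * α)) →
          (∀ j, ∀ s s' : ℝ, κ + 2 ^ (j + 1) ≤ |s - s'| →
            ∫ ω, g j (τ s ω) * g j (τ s' ω) ∂μ = 0) →
        ∀ F : Ω → ℝ, MemLp F 2 μ →
          Tendsto (fun N : ℕ =>
              ∫ ω, (F ω - ∑ j ∈ Finset.range N, g j ω) ^ 2 ∂μ) atTop (nhds 0) →
        ∀ t : ℝ,
          ∫ ω, (∫ s in (0:ℝ)..t, F (τ s ω)) ^ 2 ∂μ ≤ C * |t| := by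
  set K : ℝ := Real.sqrt (2 * M) * (Real.sqrt κ * (1 - Real.sqrt ((2:ℝ) ^ (-α)))⁻¹
    + Real.sqrt 2 * (1 - Real.sqrt ((2:ℝ) ^ ((1:ℝ) - α)))⁻¹) with hK
  refine ⟨K ^ 2 + 1, by positivity, ?_⟩
  intro Ω mΩ μ hPM τ hτ hτm g hg2 hgmean hgvar hgdec F hF hFtend t
  letI : MeasurableSpace Ω := mΩ
  haveI : IsProbabilityMeasure μ := hPM
  set a : ℝ := min 0 t with ha
  set b : ℝ := max 0 t with hb
  have hab : a ≤ b := min_le_max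
  have hTnn : (0:ℝ) ≤ b - a := sub_nonneg.mpr hab
  have hba : b - a = |t| := by
    rcases le_or_gt 0 t with h | h
    · rw [ha, hb, min_eq_left h, max_eq_right h, abs_of_nonneg h, sub_zero]
    · rw [ha, hb, min_eq_right h.le, max_eq_left h.le, abs_of_neg h, zero_sub]
  -- measurable representatives
  set F' : Ω → ℝ := hF.1.mk F with hF'def
  have hF'm : Measurable F' := hF.1.stronglyMeasurable_mk.measurable
  have hFae : F =ᵐ[μ] F' := hF.1.ae_eq_mk
  have hF2' : MemLp F' 2 μ := hF.ae_eq hFae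
  set g' : ℕ → Ω → ℝ := fun j => (hg2 j).1.mk (g j) with hg'def
  have hg'm : ∀ j, Measurable (g' j) := fun j => (hg2 j).1.stronglyMeasurable_mk.measurable
  have hgae : ∀ j, g j =ᵐ[μ] g' j := fun j => (hg2 j).1.ae_eq_mk
  have hg2' : ∀ j, MemLp (g' j) 2 μ := fun j => (hg2 j).ae_eq (hgae j)
  have hgvar' : ∀ j, ∫ ω, g' j ω ^ 2 ∂μ ≤ M * 2 ^ (-(j:ℝ) * α) := by
    intro j
    have he : ∫ ω, g j ω ^ 2 ∂μ = ∫ ω, g' j ω ^ 2 ∂μ :=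
      integral_congr_ae ((hgae j).mono fun ω hω => by simp only [hω])
    rw [← he]; exact hgvar j
  have hgdec' : ∀ j, ∀ s s' : ℝ, κ + 2 ^ (j + 1) ≤ |s - s'| →
      ∫ ω, g' j (τ s ω) * g' j (τ s' ω) ∂μ = 0 := by
    intro j s s' hss
    have e1 : (fun ω => g j (τ s ω)) =ᵐ[μ] fun ω => g' j (τ s ω) :=
      (hτ s).quasiMeasurePreserving.ae_eq_comp (hgae j)
    have e2 : (fun ω => g j (τ s' ω)) =ᵐ[μ] fun ω => g' j (τ s' ω) :=
      (hτ s').quasiMeasurePreserving.ae_eq_comp (hgae j)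
    have he : ∫ ω, g j (τ s ω) * g j (τ s' ω) ∂μ
        = ∫ ω, g' j (τ s ω) * g' j (τ s' ω) ∂μ := by
      refine integral_congr_ae ?_
      filter_upwards [e1, e2] with ω h1 h2
      rw [h1, h2]
    rw [← he]; exact hgdec j s s' hss
  -- partial sums
  set P : ℕ → Ω → ℝ := fun N ω => ∑ j ∈ Finset.range N, g' j ω with hP
  have hPm : ∀ N, Measurable (P N) := fun N =>
    Finset.measurable_sum _ fun j _ => hg'm j
  have hP2 : ∀ N, MemLp (P N) 2 μ := fun N =>
    memLp_finset_sum _ fun j _ => hg2' j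
  set c : ℕ → ℝ := fun j => Real.sqrt (2 * (κ + 2 ^ (j + 1)) * (M * 2 ^ (-(j:ℝ) * α)))
    with hc
  have hc0 : ∀ j, 0 ≤ c j := fun j => Real.sqrt_nonneg _
  have hKsum : ∀ N, ∑ j ∈ Finset.range N, c j ≤ K := fun N => sum_c_le hα hκ hM N
  have hsum0 : ∀ N, (0:ℝ) ≤ ∑ j ∈ Finset.range N, c j := fun N =>
    Finset.sum_nonneg fun j _ => hc0 j
  -- inductive Minkowski bound for partial sums
  have key : ∀ N : ℕ, ∫ ω, (∫ s in Set.Ioc a b, P N (τ s ω)) ^ 2 ∂μ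
      ≤ ((∑ j ∈ Finset.range N, c j) * Real.sqrt (b - a)) ^ 2 := by
    intro N
    induction N with
    | zero => simp [hP]
    | succ N ih =>
      have hsplit : ∀ᵐ ω ∂μ, (∫ s in Set.Ioc a b, P (N+1) (τ s ω)) =
          (∫ s in Set.Ioc a b, P N (τ s ω)) + ∫ s in Set.Ioc a b, g' N (τ s ω) := by
        filter_upwards [S_add hτ hτm a b (hPm N) (hg'm N)
          ((hP2 N).integrable one_le_two) ((hg2' N).integrable one_le_two)] with ω hω
        rw [← hω]
        exact integral_congr_ae (Eventually.of_forall fun s => by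
          simp [hP, Finset.sum_range_succ])
      have hLnn : (0:ℝ) ≤ κ + 2 ^ (N + 1) := by positivity
      have hcov := cov_bound hτ hτm a b hab (hg'm N) (hg2' N) hLnn (hgvar' N) (hgdec' N)
      have hcN : (c N * Real.sqrt (b - a)) ^ 2
          = 2 * (κ + 2 ^ (N + 1)) * (M * 2 ^ (-(N:ℝ) * α)) * (b - a) := by
        rw [mul_pow, Real.sq_sqrt hTnn, hc, Real.sq_sqrt (by positivity)]
      calc ∫ ω, (∫ s in Set.Ioc a b, P (N+1) (τ s ω)) ^ 2 ∂μ
          = ∫ ω, ((∫ s in Set.Ioc a b, P N (τ s ω))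
              + ∫ s in Set.Ioc a b, g' N (τ s ω)) ^ 2 ∂μ :=
            integral_congr_ae (hsplit.mono fun ω hω => by simp only [hω])
        _ ≤ ((∑ j ∈ Finset.range N, c j) * Real.sqrt (b - a)
              + c N * Real.sqrt (b - a)) ^ 2 := by
            refine mink (crude hτ hτm a b hab (hPm N) (hP2 N)).1
              (crude hτ hτm a b hab (hg'm N) (hg2' N)).1
              (mul_nonneg (hsum0 N) (Real.sqrt_nonneg _))
              (mul_nonneg (hc0 N) (Real.sqrt_nonneg _)) ih ?_
            rw [hcN]
            exact hcov
        _ = ((∑ j ∈ Finset.range (N+1), c j) * Real.sqrt (b - a)) ^ 2 := by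
            rw [Finset.sum_range_succ]; ring
  -- remainder control
  have hε : ∀ N, ∫ ω, (F' ω - P N ω) ^ 2 ∂μ
      = ∫ ω, (F ω - ∑ j ∈ Finset.range N, g j ω) ^ 2 ∂μ := by
    intro N
    refine integral_congr_ae ?_
    have hgall : ∀ᵐ ω ∂μ, ∀ j, g j ω = g' j ω := ae_all_iff.mpr hgae
    filter_upwards [hFae, hgall] with ω h1 h2
    rw [hP]
    simp only
    rw [← h1]
    congr 1
    congr 1
    exact (Finset.sum_congr rfl fun j _ => (h2 j).symm)
  have hεnn : ∀ N, 0 ≤ ∫ ω, (F' ω - P N ω) ^ 2 ∂μ := fun N =>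
    integral_nonneg fun _ => sq_nonneg _
  have hεtend : Tendsto (fun N => ∫ ω, (F' ω - P N ω) ^ 2 ∂μ) atTop (nhds 0) := by
    have he : (fun N => ∫ ω, (F' ω - P N ω) ^ 2 ∂μ)
        = fun N => ∫ ω, (F ω - ∑ j ∈ Finset.range N, g j ω) ^ 2 ∂μ := funext hε
    rw [he]; exact hFtend
  -- main bound for each N
  have hbound : ∀ N, ∫ ω, (∫ s in Set.Ioc a b, F' (τ s ω)) ^ 2 ∂μ
      ≤ (K * Real.sqrt (b - a)
          + (b - a) * Real.sqrt (∫ ω, (F' ω - P N ω) ^ 2 ∂μ)) ^ 2 := by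
    intro N
    have hQm : Measurable fun ω => F' ω - P N ω := hF'm.sub (hPm N)
    have hQ2 : MemLp (fun ω => F' ω - P N ω) 2 μ := hF2'.sub (hP2 N)
    have hsplit : ∀ᵐ ω ∂μ, (∫ s in Set.Ioc a b, F' (τ s ω)) =
        (∫ s in Set.Ioc a b, P N (τ s ω))
          + ∫ s in Set.Ioc a b, (F' (τ s ω) - P N (τ s ω)) := by
      filter_upwards [S_add hτ hτm a b (hPm N) hQm
        ((hP2 N).integrable one_le_two) (hQ2.integrable one_le_two)] with ω hω
      rw [← hω]
      exact integral_congr_ae (Eventually.of_forall fun s => by ring)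
    have hcr := crude hτ hτm a b hab hQm hQ2
    have hrem : ∫ ω, (F' ω - P N ω) ^ 2 ∂μ
        = (Real.sqrt (∫ ω, (F' ω - P N ω) ^ 2 ∂μ)) ^ 2 := (Real.sq_sqrt (hεnn N)).symm
    have hQbound : ∫ ω, (∫ s in Set.Ioc a b, (F' (τ s ω) - P N (τ s ω))) ^ 2 ∂μ
        ≤ ((b - a) * Real.sqrt (∫ ω, (F' ω - P N ω) ^ 2 ∂μ)) ^ 2 := by
      have := hcr.2
      rw [mul_pow, ← hrem]
      exact this
    calc ∫ ω, (∫ s in Set.Ioc a b, F' (τ s ω)) ^ 2 ∂μ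
        = ∫ ω, ((∫ s in Set.Ioc a b, P N (τ s ω))
            + ∫ s in Set.Ioc a b, (F' (τ s ω) - P N (τ s ω))) ^ 2 ∂μ :=
          integral_congr_ae (hsplit.mono fun ω hω => by simp only [hω])
      _ ≤ ((∑ j ∈ Finset.range N, c j) * Real.sqrt (b - a)
            + (b - a) * Real.sqrt (∫ ω, (F' ω - P N ω) ^ 2 ∂μ)) ^ 2 := by
          refine mink (crude hτ hτm a b hab (hPm N) (hP2 N)).1 hcr.1
            (mul_nonneg (hsum0 N) (Real.sqrt_nonneg _))
            (mul_nonneg hTnn (Real.sqrt_nonneg _)) (key N) hQbound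
      _ ≤ _ := by
          refine pow_le_pow_left₀ (add_nonneg (mul_nonneg (hsum0 N) (Real.sqrt_nonneg _))
            (mul_nonneg hTnn (Real.sqrt_nonneg _))) ?_ 2
          exact add_le_add
            (mul_le_mul_of_nonneg_right (hKsum N) (Real.sqrt_nonneg _)) le_rfl
  -- take the limit in N
  have hlim : Tendsto (fun N => (K * Real.sqrt (b - a)
      + (b - a) * Real.sqrt (∫ ω, (F' ω - P N ω) ^ 2 ∂μ)) ^ 2) atTop
      (nhds ((K * Real.sqrt (b - a)) ^ 2)) := by
    have h1 : Tendsto (fun N => Real.sqrt (∫ ω, (F' ω - P N ω) ^ 2 ∂μ)) atTop (nhds 0) := by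
      have := hεtend.sqrt
      rwa [Real.sqrt_zero] at this
    have h2 := ((tendsto_const_nhds (x := K * Real.sqrt (b - a))).add
      (h1.const_mul (b - a))).pow 2
    simpa using h2
  have hfin : ∫ ω, (∫ s in Set.Ioc a b, F' (τ s ω)) ^ 2 ∂μ ≤ (K * Real.sqrt (b - a)) ^ 2 :=
    ge_of_tendsto' hlim hbound
  -- transfer to interval integral with the original F
  have hae_inner : ∀ᵐ ω ∂μ, (∫ s in (0:ℝ)..t, F (τ s ω)) ^ 2
      = (∫ s in Set.Ioc a b, F' (τ s ω)) ^ 2 := by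
    filter_upwards [ae_comp_eq hτ hτm hFae (volume.restrict (Set.Ioc a b))] with ω hω
    rw [sq_intervalIntegral (fun s => F (τ s ω)) t, ← ha, ← hb]
    congr 1
    exact integral_congr_ae hω
  calc ∫ ω, (∫ s in (0:ℝ)..t, F (τ s ω)) ^ 2 ∂μ
      = ∫ ω, (∫ s in Set.Ioc a b, F' (τ s ω)) ^ 2 ∂μ := integral_congr_ae hae_inner
    _ ≤ (K * Real.sqrt (b - a)) ^ 2 := hfin
    _ = K ^ 2 * (b - a) := by rw [mul_pow, Real.sq_sqrt hTnn]
    _ = K ^ 2 * |t| := by rw [hba]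
    _ ≤ (K ^ 2 + 1) * |t| := by nlinarith [abs_nonneg t]
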